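/- arXiv:2106.12860 — 2 statements merged into one kernel-verified Lean document; each statement's English description precedes it below -/
import Mathlib

section
/- Let K, G, G_c, B, B_c, K_c be nonzero real numbers. Let ε be a symmetric 3×3 matrix, ω a skew-symmetric 3×3 matrix, and χ an arbitrary 3×3 matrix; set e = dev ε, g_sym = dev(sym χ), g_skw = skew χ. Define the stress σ = K (tr ε) I + 2G e + 2G_c ω and couple-stress μ = K_c (tr χ) I + 2B g_sym + 2B_c g_skw, and write s_sym = dev(sym σ), s_skw = skew σ, m_sym = dev(sym μ), m_skw = skew μ. Then the elastic distortion energy Ψ_D = (1/2)[ s_sym : ε + s_skw : ω + m_sym : g_sym + m_skw : g_skw + (1/3)(tr μ)(tr χ) ] satisfies Ψ_D = (1/(4G)) [ s_sym : s_sym + (G/G_c) s_skw : s_skw + (G/B) m_sym : m_sym + (G/B_c) m_skw : m_skw + (2G/K_c)(tr μ)²/9 ]. -/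
open Matrix

/-- Double contraction `A : B = ∑ i j, A_{ij} B_{ij}`. -/
def dc (A B : Matrix (Fin 3) (Fin 3) ℝ) : ℝ := ∑ i, ∑ j, A i j * B i j

/-- Symmetric part `(A + Aᵀ)/2`. -/
noncomputable def symPart (A : Matrix (Fin 3) (Fin 3) ℝ) : Matrix (Fin 3) (Fin 3) ℝ :=
  (1 / 2 : ℝ) • (A + Aᵀ)

/-- Skew-symmetric part `(A - Aᵀ)/2`. -/
noncomputable def skewPart (A : Matrix (Fin 3) (Fin 3) ℝ) : Matrix (Fin 3) (Fin 3) ℝ :=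
  (1 / 2 : ℝ) • (A - Aᵀ)

/-- Deviatoric part `A - (tr A / 3) I`. -/
noncomputable def dev (A : Matrix (Fin 3) (Fin 3) ℝ) : Matrix (Fin 3) (Fin 3) ℝ :=
  A - (A.trace / 3) • (1 : Matrix (Fin 3) (Fin 3) ℝ)

namespace StmtAux

variable (A A' B' : Matrix (Fin 3) (Fin 3) ℝ) (c : ℝ)

lemma dc_smul_left : dc (c • A) B' = c * dc A B' := by
  simp [dc, Finset.mul_sum, mul_assoc]

lemma dc_add_right : dc A (A' + B') = dc A A' + dc A B' := by
  simp [dc, mul_add, Finset.sum_add_distrib]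

lemma dc_smul_right : dc A (c • A') = c * dc A A' := by
  simp only [dc, Matrix.smul_apply, smul_eq_mul, Finset.mul_sum]
  refine Finset.sum_congr rfl fun i _ => Finset.sum_congr rfl fun j _ => by ring

lemma dc_one_right : dc A 1 = A.trace := by
  simp [dc, Matrix.one_apply, mul_ite, Matrix.trace, Matrix.diag]

lemma symPart_symm (h : Aᵀ = A) : symPart A = A := by
  rw [symPart, h, ← two_smul ℝ A, smul_smul]; norm_num

lemma symPart_skew (h : Aᵀ = -A) : symPart A = 0 := by
  simp [symPart, h]

lemma skewPart_symm (h : Aᵀ = A) : skewPart A = 0 := by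
  simp [skewPart, h]

lemma skewPart_skew (h : Aᵀ = -A) : skewPart A = A := by
  rw [skewPart, h, sub_neg_eq_add, ← two_smul ℝ A, smul_smul]; norm_num

lemma symPart_add : symPart (A' + B') = symPart A' + symPart B' := by
  simp [symPart, Matrix.transpose_add, smul_add]; abel

lemma symPart_smul : symPart (c • A) = c • symPart A := by
  simp [symPart, Matrix.transpose_smul, smul_add, smul_smul, mul_comm]

lemma skewPart_add : skewPart (A' + B') = skewPart A' + skewPart B' := by
  simp [skewPart, Matrix.transpose_add, smul_sub]; abel

lemma skewPart_smul : skewPart (c • A) = c • skewPart A := by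
  simp [skewPart, Matrix.transpose_smul, smul_sub, smul_smul, mul_comm]

lemma dev_add : dev (A' + B') = dev A' + dev B' := by
  simp only [dev, Matrix.trace_add, add_div, add_smul]; abel

lemma dev_smul : dev (c • A) = c • dev A := by
  simp [dev, Matrix.trace_smul, smul_sub, smul_smul, mul_div_assoc]

lemma trace_dev : (dev A).trace = 0 := by
  simp [dev, Matrix.trace_sub, Matrix.trace_smul, Matrix.trace_one]

lemma dev_one : dev (1 : Matrix (Fin 3) (Fin 3) ℝ) = 0 := by
  simp [dev, Matrix.trace_one]

lemma dev_traceless (h : A.trace = 0) : dev A = A := by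
  simp [dev, h]

lemma dev_transpose : (dev A)ᵀ = dev Aᵀ := by
  simp [dev, Matrix.transpose_smul, Matrix.trace_transpose]

lemma trace_skewPart : (skewPart A).trace = 0 := by
  simp [skewPart, Matrix.trace_smul, Matrix.trace_sub, Matrix.trace_transpose]

lemma skewPart_transpose : (skewPart A)ᵀ = -skewPart A := by
  simp [skewPart, Matrix.transpose_smul, Matrix.transpose_sub, smul_sub]

lemma symPart_transpose : (symPart A)ᵀ = symPart A := by
  simp [symPart, Matrix.transpose_smul, Matrix.transpose_add, add_comm]

end StmtAux

open StmtAux in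
theorem stmt_7 (K G Gc B Bc Kc : ℝ)
    (hK : K ≠ 0) (hG : G ≠ 0) (hGc : Gc ≠ 0) (hB : B ≠ 0) (hBc : Bc ≠ 0) (hKc : Kc ≠ 0)
    (ε ω χ : Matrix (Fin 3) (Fin 3) ℝ) (hε : εᵀ = ε) (hω : ωᵀ = -ω) :
    let e := dev ε
    let gsym := dev (symPart χ)
    let gskw := skewPart χ
    let σ := (K * ε.trace) • (1 : Matrix (Fin 3) (Fin 3) ℝ) + (2 * G) • e + (2 * Gc) • ω
    let μ := (Kc * χ.trace) • (1 : Matrix (Fin 3) (Fin 3) ℝ) + (2 * B) • gsym + (2 * Bc) • gskw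
    let ssym := dev (symPart σ)
    let sskw := skewPart σ
    let msym := dev (symPart μ)
    let mskw := skewPart μ
    (1 / 2 : ℝ) * (dc ssym ε + dc sskw ω + dc msym gsym + dc mskw gskw
        + (1 / 3) * μ.trace * χ.trace) =
      (1 / (4 * G)) * (dc ssym ssym + (G / Gc) * dc sskw sskw + (G / B) * dc msym msym
        + (G / Bc) * dc mskw mskw + (2 * G / Kc) * μ.trace ^ 2 / 9) := by
  intro e gsym gskw σ μ ssym sskw msym mskw
  have hone : (1 : Matrix (Fin 3) (Fin 3) ℝ)ᵀ = 1 := Matrix.transpose_one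
  -- symmetry facts
  have he : eᵀ = e := by
    show (dev ε)ᵀ = dev ε
    rw [dev_transpose, hε]
  have hgsym : gsymᵀ = gsym := by
    show (dev (symPart χ))ᵀ = dev (symPart χ)
    rw [dev_transpose, symPart_transpose]
  have hgskw : gskwᵀ = -gskw := skewPart_transpose χ
  -- traces
  have tre : e.trace = 0 := trace_dev ε
  have trgsym : gsym.trace = 0 := trace_dev (symPart χ)
  have trgskw : gskw.trace = 0 := trace_skewPart χ
  -- decompose σ and μ
  have hssym : ssym = (2 * G) • e := by
    show dev (symPart σ) = (2 * G) • e
    show dev (symPart ((K * ε.trace) • (1 : Matrix (Fin 3) (Fin 3) ℝ)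
        + (2 * G) • e + (2 * Gc) • ω)) = (2 * G) • e
    rw [symPart_add, symPart_add, symPart_smul, symPart_smul, symPart_smul,
      symPart_symm _ hone, symPart_symm _ he, symPart_skew _ hω, smul_zero, add_zero,
      dev_add, dev_smul, dev_smul, dev_one, smul_zero, zero_add,
      dev_traceless _ tre]
  have hsskw : sskw = (2 * Gc) • ω := by
    show skewPart ((K * ε.trace) • (1 : Matrix (Fin 3) (Fin 3) ℝ)
        + (2 * G) • e + (2 * Gc) • ω) = (2 * Gc) • ω
    rw [skewPart_add, skewPart_add, skewPart_smul, skewPart_smul, skewPart_smul,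
      skewPart_symm _ hone, skewPart_symm _ he, skewPart_skew _ hω, smul_zero, smul_zero,
      zero_add, zero_add]
  have hmsym : msym = (2 * B) • gsym := by
    show dev (symPart ((Kc * χ.trace) • (1 : Matrix (Fin 3) (Fin 3) ℝ)
        + (2 * B) • gsym + (2 * Bc) • gskw)) = (2 * B) • gsym
    rw [symPart_add, symPart_add, symPart_smul, symPart_smul, symPart_smul,
      symPart_symm _ hone, symPart_symm _ hgsym, symPart_skew _ hgskw, smul_zero, add_zero,
      dev_add, dev_smul, dev_smul, dev_one, smul_zero, zero_add,
      dev_traceless _ trgsym]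
  have hmskw : mskw = (2 * Bc) • gskw := by
    show skewPart ((Kc * χ.trace) • (1 : Matrix (Fin 3) (Fin 3) ℝ)
        + (2 * B) • gsym + (2 * Bc) • gskw) = (2 * Bc) • gskw
    rw [skewPart_add, skewPart_add, skewPart_smul, skewPart_smul, skewPart_smul,
      skewPart_symm _ hone, skewPart_symm _ hgsym, skewPart_skew _ hgskw, smul_zero,
      smul_zero, zero_add, zero_add]
  have htrμ : μ.trace = 3 * (Kc * χ.trace) := by
    show ((Kc * χ.trace) • (1 : Matrix (Fin 3) (Fin 3) ℝ)
        + (2 * B) • gsym + (2 * Bc) • gskw).trace = 3 * (Kc * χ.trace)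
    rw [Matrix.trace_add, Matrix.trace_add, Matrix.trace_smul, Matrix.trace_smul,
      Matrix.trace_smul, Matrix.trace_one, trgsym, trgskw]
    simp
    ring
  -- the five contraction identities
  have hεdec : ε = e + (ε.trace / 3) • (1 : Matrix (Fin 3) (Fin 3) ℝ) := by
    show ε = dev ε + (ε.trace / 3) • (1 : Matrix (Fin 3) (Fin 3) ℝ)
    rw [dev]; abel
  have h1 : dc ssym ε = 2 * G * dc e e := by
    rw [hssym, dc_smul_left]
    conv_lhs => rw [hεdec]
    rw [dc_add_right, dc_smul_right, dc_one_right, tre]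
    ring
  have h2 : dc sskw ω = 2 * Gc * dc ω ω := by rw [hsskw, dc_smul_left]
  have h3 : dc msym gsym = 2 * B * dc gsym gsym := by rw [hmsym, dc_smul_left]
  have h4 : dc mskw gskw = 2 * Bc * dc gskw gskw := by rw [hmskw, dc_smul_left]
  have h5 : dc ssym ssym = 2 * G * (2 * G * dc e e) := by
    rw [hssym, dc_smul_left, dc_smul_right]
  have h6 : dc sskw sskw = 2 * Gc * (2 * Gc * dc ω ω) := by
    rw [hsskw, dc_smul_left, dc_smul_right]
  have h7 : dc msym msym = 2 * B * (2 * B * dc gsym gsym) := by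
    rw [hmsym, dc_smul_left, dc_smul_right]
  have h8 : dc mskw mskw = 2 * Bc * (2 * Bc * dc gskw gskw) := by
    rw [hmskw, dc_smul_left, dc_smul_right]
  rw [h1, h2, h3, h4, h5, h6, h7, h8, htrμ]
  field_simp
  ring
end

section
/- For every symmetric traceless 3×3 real matrix s, (27/2)|det s| ≤ ((3/2) s : s)^{3/2}; equivalently, 27² (det s)² ≤ 4 ((3/2) s : s)³. Consequently, whenever q_s = √((3/2) s : s) > 0, the quantity −(27/2) det(s)/q_s³ lies in [−1, 1], so the Lode angle θ_s = (1/3) arcsin( −(27/2) det(s)/q_s³ ) is well defined and lies in [−π/6, π/6]. -/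
open Matrix Real

theorem stmt_12 (s : Matrix (Fin 3) (Fin 3) ℝ) (hsym : sᵀ = s) (htr : s.trace = 0) :
    (27 / 2) * |s.det| ≤ ((3 / 2) * dc s s) ^ ((3 : ℝ) / 2) ∧
    27 ^ 2 * s.det ^ 2 ≤ 4 * ((3 / 2) * dc s s) ^ 3 ∧
    (0 < Real.sqrt ((3 / 2) * dc s s) →
      (-(27 / 2) * s.det / Real.sqrt ((3 / 2) * dc s s) ^ 3 ∈ Set.Icc (-1 : ℝ) 1 ∧
       (1 / 3) * Real.arcsin (-(27 / 2) * s.det / Real.sqrt ((3 / 2) * dc s s) ^ 3) ∈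
         Set.Icc (-(π / 6)) (π / 6))) := by
  have hH : s.IsHermitian := by
    rwa [Matrix.IsHermitian, conjTranspose_eq_transpose_of_trivial]
  have key : ∀ a b c : ℝ, a + b + c = 0 →
      54 * (a * b * c) ^ 2 ≤ (a ^ 2 + b ^ 2 + c ^ 2) ^ 3 := by
    intro a b c h
    have hc : c = -a - b := by linarith
    subst hc
    nlinarith [sq_nonneg ((a - b) * (a + 2 * b) * (2 * a + b)), sq_nonneg (a + b),
      sq_nonneg (a - b), sq_nonneg a, sq_nonneg b]
  have hUU : star (hH.eigenvectorUnitary : Matrix (Fin 3) (Fin 3) ℝ)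
      * (hH.eigenvectorUnitary : Matrix (Fin 3) (Fin 3) ℝ) = 1 :=
    Matrix.mem_unitaryGroup_iff'.mp hH.eigenvectorUnitary.2
  have hcoe : (RCLike.ofReal ∘ hH.eigenvalues : Fin 3 → ℝ) = hH.eigenvalues := by
    funext i; simp [RCLike.ofReal]
  have hspec : s = (hH.eigenvectorUnitary : Matrix (Fin 3) (Fin 3) ℝ)
      * diagonal hH.eigenvalues * star (hH.eigenvectorUnitary : Matrix (Fin 3) (Fin 3) ℝ) := by
    have := hH.spectral_theorem
    rwa [hcoe] at this
  -- trace = sum of eigenvalues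
  have hsum : hH.eigenvalues 0 + hH.eigenvalues 1 + hH.eigenvalues 2 = 0 := by
    have h1 : s.trace = (diagonal hH.eigenvalues).trace := by
      conv_lhs => rw [hspec]
      rw [Matrix.trace_mul_comm, ← mul_assoc, hUU, one_mul]
    rw [htr] at h1
    simpa [Matrix.trace_diagonal, Fin.sum_univ_three] using h1.symm
  -- determinant
  have hdet : s.det = hH.eigenvalues 0 * hH.eigenvalues 1 * hH.eigenvalues 2 := by
    have := hH.det_eq_prod_eigenvalues
    simpa [Fin.prod_univ_three] using this
  -- dc s s = sum of squares of eigenvalues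
  have hsij : ∀ i j, s j i = s i j := by
    intro i j
    have h := congrFun (congrFun hsym i) j
    rwa [transpose_apply] at h
  have hdc : dc s s = hH.eigenvalues 0 ^ 2 + hH.eigenvalues 1 ^ 2 + hH.eigenvalues 2 ^ 2 := by
    have h1 : dc s s = (s * s).trace := by
      simp only [dc, Matrix.trace, Matrix.diag, Matrix.mul_apply]
      refine Finset.sum_congr rfl fun i _ => Finset.sum_congr rfl fun j _ => ?_
      rw [hsij i j]
    have h2 : s * s = (hH.eigenvectorUnitary : Matrix (Fin 3) (Fin 3) ℝ)
        * (diagonal hH.eigenvalues * diagonal hH.eigenvalues)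
        * star (hH.eigenvectorUnitary : Matrix (Fin 3) (Fin 3) ℝ) := by
      conv_lhs => rw [hspec]
      rw [show ∀ U D W : Matrix (Fin 3) (Fin 3) ℝ, U * D * W * (U * D * W)
          = U * D * (W * U) * D * W from fun U D W => by noncomm_ring]
      rw [hUU]
      noncomm_ring
    have h3 : (s * s).trace = (diagonal hH.eigenvalues * diagonal hH.eigenvalues).trace := by
      rw [h2, Matrix.trace_mul_comm, ← mul_assoc, hUU, one_mul]
    rw [h1, h3, diagonal_mul_diagonal]
    simp [Matrix.trace_diagonal, Fin.sum_univ_three, pow_two]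
  have key' : 54 * s.det ^ 2 ≤ (dc s s) ^ 3 := by
    rw [hdet, hdc]
    exact key _ _ _ hsum
  have hdc0 : (0 : ℝ) ≤ dc s s := by rw [hdc]; positivity
  have hQ0 : (0 : ℝ) ≤ (3 / 2) * dc s s := by linarith
  have part2 : 27 ^ 2 * s.det ^ 2 ≤ 4 * ((3 / 2) * dc s s) ^ 3 := by
    nlinarith [key']
  have hsq : ((3 / 2) * dc s s) ^ ((3 : ℝ) / 2) = Real.sqrt (((3 / 2) * dc s s) ^ 3) := by
    rw [Real.sqrt_eq_rpow, ← Real.rpow_natCast ((3 / 2) * dc s s) 3, ← Real.rpow_mul hQ0]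
    norm_num
  have part1 : (27 / 2) * |s.det| ≤ ((3 / 2) * dc s s) ^ ((3 : ℝ) / 2) := by
    rw [hsq, Real.le_sqrt (by positivity) (by positivity)]
    have h4 : ((27 : ℝ) / 2 * |s.det|) ^ 2 = 27 ^ 2 * s.det ^ 2 / 4 := by
      rw [mul_pow, sq_abs]; ring
    rw [h4]
    linarith [part2]
  refine ⟨part1, part2, fun hq => ?_⟩
  have hcube : Real.sqrt ((3 / 2) * dc s s) ^ 3 = Real.sqrt (((3 / 2) * dc s s) ^ 3) := by
    rw [pow_succ, Real.sq_sqrt hQ0,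
      show ((3 / 2) * dc s s) ^ 3 = ((3 / 2) * dc s s) ^ 2 * ((3 / 2) * dc s s) by ring,
      Real.sqrt_mul (sq_nonneg _), Real.sqrt_sq hQ0]
  have hpos : 0 < Real.sqrt ((3 / 2) * dc s s) ^ 3 := by positivity
  have habs : |(-(27 / 2) * s.det)| ≤ Real.sqrt ((3 / 2) * dc s s) ^ 3 := by
    rw [hcube, ← hsq]
    calc |(-(27 / 2) * s.det)| = 27 / 2 * |s.det| := by
          rw [abs_mul]; norm_num
      _ ≤ _ := part1
  have hmem : -(27 / 2) * s.det / Real.sqrt ((3 / 2) * dc s s) ^ 3 ∈ Set.Icc (-1 : ℝ) 1 := by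
    rw [Set.mem_Icc]
    constructor
    · rw [le_div_iff₀ hpos]
      have := (abs_le.mp habs).1
      linarith
    · rw [div_le_one hpos]
      have := (abs_le.mp habs).2
      linarith
  refine ⟨hmem, ?_⟩
  rw [Set.mem_Icc]
  constructor
  · have := Real.neg_pi_div_two_le_arcsin
      (-(27 / 2) * s.det / Real.sqrt ((3 / 2) * dc s s) ^ 3)
    linarith
  · have := Real.arcsin_le_pi_div_two
      (-(27 / 2) * s.det / Real.sqrt ((3 / 2) * dc s s) ^ 3)
    linarith
end
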